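/- Let R be a valuation ring with rank-1 valuation v, and let x_0,…,x_n, y_0,…,y_n ∈ R. Suppose v(y_n) < v(x_m) for all 0 ≤ m ≤ n and v(y_n) < v(y_m) for all 0 ≤ m < n. Then for any nonnegative integers i_0, j_0, …, i_{n−1}, j_{n−1} with Σ_{k=0}^{n−1} p^k(i_k + j_k) = p^n, one has v(∏_{k=0}^{n−1} y_k^{p^k i_k} x_k^{p^k j_k}) > p^n · v(y_n). Consequently v(S_n(y_0,…,y_n^{p^n}; x_0,…,x_n^{p^n})) = p^n · v(y_n), where S_n is the n-th Witt addition polynomial. -/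

import Mathlib

open MvPolynomial Finset

theorem aux_whomog_pow {σ R : Type*} [CommSemiring R] {w : σ → ℕ}
    {φ : MvPolynomial σ R} {m : ℕ} (hφ : φ.IsWeightedHomogeneous w m) (k : ℕ) :
    (φ ^ k).IsWeightedHomogeneous w (k * m) := by
  induction k with
  | zero => simpa using MvPolynomial.isWeightedHomogeneous_one R w
  | succ k ih => rw [pow_succ, Nat.succ_mul]; exact ih.mul hφ

theorem aux_whomog_bind₁ {σ τ R : Type*} [CommSemiring R] (w : σ → ℕ) (w' : τ → ℕ)
    (f : σ → MvPolynomial τ R) (hf : ∀ i, (f i).IsWeightedHomogeneous w' (w i))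
    {φ : MvPolynomial σ R} {m : ℕ} (hφ : φ.IsWeightedHomogeneous w m) :
    (MvPolynomial.bind₁ f φ).IsWeightedHomogeneous w' m := by
  rw [φ.as_sum, map_sum]
  apply IsWeightedHomogeneous.sum
  intro d hd
  rw [bind₁_monomial]
  have hm : ∑ i ∈ d.support, d i * w i = m := by
    have h := hφ (MvPolynomial.mem_support_iff.mp hd)
    simpa [Finsupp.weight_apply, Finsupp.sum, smul_eq_mul] using h
  have h2 := MvPolynomial.IsWeightedHomogeneous.prod d.support (fun i => f i ^ d i)
    (fun i => d i * w i) (fun i _ => aux_whomog_pow (hf i) (d i))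
  have h0 := MvPolynomial.isWeightedHomogeneous_C w' (R := R) (MvPolynomial.coeff d φ)
  simpa [hm] using h0.mul h2

open MvPolynomial Finset Witt

theorem aux_whomog_witt (p : ℕ) (R : Type*) [CommRing R] (n : ℕ) :
    (wittPolynomial p R n).IsWeightedHomogeneous (fun k => p ^ k) (p ^ n) := by
  unfold wittPolynomial
  apply IsWeightedHomogeneous.sum
  intro i hi
  apply isWeightedHomogeneous_monomial
  rw [Finsupp.weight_apply, Finsupp.sum_single_index (by simp)]
  simp only [smul_eq_mul]
  rw [← pow_add, Nat.sub_add_cancel (Nat.lt_succ_iff.mp (Finset.mem_range.mp hi))]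

theorem aux_whomog_rename {σ τ R : Type*} [CommSemiring R] {w : σ → ℕ} (w' : τ → ℕ)
    (g : σ → τ) (hg : ∀ i, w' (g i) = w i) {φ : MvPolynomial σ R} {m : ℕ}
    (hφ : φ.IsWeightedHomogeneous w m) :
    (MvPolynomial.rename g φ).IsWeightedHomogeneous w' m := by
  have : MvPolynomial.rename g φ = MvPolynomial.bind₁ (fun i => MvPolynomial.X (g i)) φ := by
    rw [MvPolynomial.rename_eq_aeval]; rfl
  rw [this]
  exact aux_whomog_bind₁ w w' _ (fun i => by simpa [hg i] using isWeightedHomogeneous_X R w' (g i)) hφ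
theorem aux_whomog_SRat (p : ℕ) [Fact p.Prime] (n : ℕ) :
    (wittStructureRat p (X 0 + X 1 : MvPolynomial (Fin 2) ℚ) n).IsWeightedHomogeneous
      (fun bk : Fin 2 × ℕ => p ^ bk.2) (p ^ n) := by
  induction n using Nat.strong_induction_on with
  | _ n ih =>
    rw [wittStructureRat_rec, ← MvPolynomial.smul_eq_C_mul,
      ← mem_weightedHomogeneousSubmodule]
    apply Submodule.smul_mem
    apply sub_mem
    · rw [mem_weightedHomogeneousSubmodule, map_add, bind₁_X_right, bind₁_X_right]
      exact (aux_whomog_rename (fun bk : Fin 2 × ℕ => p ^ bk.2) (fun i => ((0 : Fin 2), i))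
          (fun i => rfl) (aux_whomog_witt p ℚ n)).add
        (aux_whomog_rename (fun bk : Fin 2 × ℕ => p ^ bk.2) (fun i => ((1 : Fin 2), i))
          (fun i => rfl) (aux_whomog_witt p ℚ n))
    · apply Submodule.sum_mem
      intro i hi
      rw [← MvPolynomial.smul_eq_C_mul]
      apply Submodule.smul_mem
      rw [mem_weightedHomogeneousSubmodule]
      have h := aux_whomog_pow (ih i (Finset.mem_range.mp hi)) (p ^ (n - i))
      rwa [← pow_add, Nat.sub_add_cancel (le_of_lt (Finset.mem_range.mp hi))] at h

theorem aux_whomog_wittAdd (p : ℕ) [Fact p.Prime] (n : ℕ) :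
    (WittVector.wittAdd p n).IsWeightedHomogeneous (fun bk : Fin 2 × ℕ => p ^ bk.2) (p ^ n) := by
  intro d hd
  apply aux_whomog_SRat p n (d := d)
  have hmap := map_wittStructureInt p (X 0 + X 1 : MvPolynomial (Fin 2) ℤ) n
  have heq : WittVector.wittAdd p n = wittStructureInt p (X 0 + X 1) n := rfl
  rw [show (map (Int.castRingHom ℚ) (X 0 + X 1 : MvPolynomial (Fin 2) ℤ)) =
      (X 0 + X 1 : MvPolynomial (Fin 2) ℚ) by simp] at hmap
  rw [← hmap, MvPolynomial.coeff_map]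
  simpa [← heq] using hd
theorem aux_coeff_SRat (p : ℕ) [Fact p.Prime] (n : ℕ) (b : Fin 2) :
    MvPolynomial.coeff (Finsupp.single (b, n) 1)
      (wittStructureRat p (X 0 + X 1 : MvPolynomial (Fin 2) ℚ) n) = 1 := by
  set d₀ : (Fin 2 × ℕ) →₀ ℕ := Finsupp.single (b, n) 1 with hd₀
  have hprop := wittStructureRat_prop p (X 0 + X 1 : MvPolynomial (Fin 2) ℚ) n
  have hinj : ∀ b' : Fin 2, Function.Injective (Prod.mk b' : ℕ → Fin 2 × ℕ) := by
    intro b' a1 a2 h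
    exact (Prod.mk.injEq _ _ _ _).mp h |>.2
  have hWcoeff : MvPolynomial.coeff (Finsupp.single n 1) (wittPolynomial p ℚ n) = (p : ℚ) ^ n := by
    rw [wittPolynomial, MvPolynomial.coeff_sum, Finset.sum_eq_single n]
    · simp [MvPolynomial.coeff_monomial]
    · intro i hi hne
      rw [MvPolynomial.coeff_monomial, if_neg]
      intro h
      rcases Finsupp.single_eq_single_iff _ _ _ _ |>.mp h with ⟨h1, _⟩ | ⟨h1, h2⟩
      · exact hne h1
      · exact pow_ne_zero _ (Fact.out (p := p.Prime)).ne_zero h1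
    · intro h; exact absurd (Finset.self_mem_range_succ n) h
  have key : ∀ b' : Fin 2, MvPolynomial.coeff d₀ (rename (Prod.mk b') (wittPolynomial p ℚ n))
      = if b' = b then (p : ℚ) ^ n else 0 := by
    intro b'
    by_cases hb : b' = b
    · subst hb
      rw [if_pos rfl, hd₀, ← Finsupp.mapDomain_single (f := Prod.mk b') (a := n) (b := 1),
        MvPolynomial.coeff_rename_mapDomain _ (hinj b')]
      exact hWcoeff
    · rw [if_neg hb]
      apply MvPolynomial.coeff_rename_eq_zero
      intro u hu
      exfalso
      have h0 : (Finsupp.mapDomain (Prod.mk b') u) (b, n) = 0 := by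
        apply Finsupp.mapDomain_notin_range
        rintro ⟨a, ha⟩
        exact hb (congrArg Prod.fst ha)
      rw [hu, hd₀] at h0
      simp at h0
  have hrhs : MvPolynomial.coeff d₀
      (bind₁ (fun i : Fin 2 => rename (Prod.mk i) (wittPolynomial p ℚ n))
        (X 0 + X 1 : MvPolynomial (Fin 2) ℚ)) = (p : ℚ) ^ n := by
    rw [map_add, bind₁_X_right, bind₁_X_right, MvPolynomial.coeff_add, key, key]
    fin_cases b <;> norm_num
  -- the LHS
  have hzero : ∀ i < n, MvPolynomial.coeff d₀
      (wittStructureRat p (X 0 + X 1 : MvPolynomial (Fin 2) ℚ) i ^ p ^ (n - i)) = 0 := by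
    intro i hi
    by_contra hc
    have hv : (b, n) ∈ (wittStructureRat p (X 0 + X 1 : MvPolynomial (Fin 2) ℚ) i ^ p ^ (n - i)).vars :=
      MvPolynomial.mem_vars _ |>.mpr ⟨d₀, MvPolynomial.mem_support_iff.mpr hc, by simp [hd₀]⟩
    have hv2 := MvPolynomial.vars_pow _ _ hv
    have hv3 := wittStructureRat_vars p (X 0 + X 1 : MvPolynomial (Fin 2) ℚ) i hv2
    rw [Finset.mem_product, Finset.mem_range] at hv3
    omega
  have hlhs : MvPolynomial.coeff d₀
      (bind₁ (wittStructureRat p (X 0 + X 1 : MvPolynomial (Fin 2) ℚ)) (wittPolynomial p ℚ n)) =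
      (p : ℚ) ^ n * MvPolynomial.coeff d₀ (wittStructureRat p (X 0 + X 1 : MvPolynomial (Fin 2) ℚ) n) := by
    rw [show (bind₁ (wittStructureRat p (X 0 + X 1 : MvPolynomial (Fin 2) ℚ)) (wittPolynomial p ℚ n))
        = aeval (wittStructureRat p (X 0 + X 1 : MvPolynomial (Fin 2) ℚ)) (wittPolynomial p ℚ n) from rfl,
      aeval_wittPolynomial, MvPolynomial.coeff_sum, Finset.sum_range_succ,
      Finset.sum_eq_zero]
    · have : ((p : MvPolynomial (Fin 2 × ℕ) ℚ)) ^ n = MvPolynomial.C ((p:ℚ)^n) := by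
        rw [map_pow, MvPolynomial.C_eq_coe_nat]
      rw [this, MvPolynomial.coeff_C_mul, Nat.sub_self, pow_zero, pow_one, zero_add]
    · intro i hi
      have : ((p : MvPolynomial (Fin 2 × ℕ) ℚ)) ^ i = MvPolynomial.C ((p:ℚ)^i) := by
        rw [map_pow, MvPolynomial.C_eq_coe_nat]
      rw [this, MvPolynomial.coeff_C_mul, hzero i (Finset.mem_range.mp hi), mul_zero]
  have := congrArg (MvPolynomial.coeff d₀) hprop
  rw [hlhs, hrhs] at this
  have hp : ((p : ℚ) ^ n) ≠ 0 := pow_ne_zero _ (Nat.cast_ne_zero.mpr (Fact.out (p := p.Prime)).ne_zero)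
  field_simp at this
  exact this

theorem aux_coeff_wittAdd (p : ℕ) [Fact p.Prime] (n : ℕ) (b : Fin 2) :
    MvPolynomial.coeff (Finsupp.single (b, n) 1) (WittVector.wittAdd p n) = 1 := by
  have hmap := map_wittStructureInt p (X 0 + X 1 : MvPolynomial (Fin 2) ℤ) n
  rw [show (map (Int.castRingHom ℚ) (X 0 + X 1 : MvPolynomial (Fin 2) ℤ)) =
      (X 0 + X 1 : MvPolynomial (Fin 2) ℚ) by simp] at hmap
  have h := aux_coeff_SRat p n b
  rw [← hmap, MvPolynomial.coeff_map] at h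
  rw [show WittVector.wittAdd p n = wittStructureInt p (X 0 + X 1) n from rfl]
  rw [eq_intCast] at h
  exact_mod_cast h
theorem aux_E_support (p : ℕ) [Fact p.Prime] (n : ℕ) (d : (Fin 2 × ℕ) →₀ ℕ)
    (hd : d ∈ (WittVector.wittAdd p n - X (0, n) - X (1, n)).support) :
    (∀ i : Fin 2 × ℕ, n ≤ i.2 → d i = 0) ∧
      (∑ k ∈ Finset.range n, p ^ k * (d (0, k) + d (1, k)) = p ^ n) := by
  have hc := MvPolynomial.mem_support_iff.mp hd
  have hne : ∀ b' : Fin 2, d ≠ Finsupp.single (b', n) 1 := by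
    intro b' hdeq
    apply hc
    subst hdeq
    rw [MvPolynomial.coeff_sub, MvPolynomial.coeff_sub, aux_coeff_wittAdd p n b',
      MvPolynomial.coeff_X', MvPolynomial.coeff_X']
    have hss : ∀ b'' : Fin 2, (Finsupp.single ((b'', n) : Fin 2 × ℕ) 1
        = Finsupp.single ((b', n) : Fin 2 × ℕ) 1) ↔ b'' = b' := by
      intro b''
      constructor
      · intro h
        rcases Finsupp.single_eq_single_iff _ _ _ _ |>.mp h with ⟨h1, _⟩ | ⟨h1, _⟩
        · exact (Prod.mk.injEq _ _ _ _).mp h1 |>.1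
        · exact absurd h1 one_ne_zero
      · rintro rfl; rfl
    fin_cases b' <;> simp [hss, Finsupp.single_eq_single_iff, Prod.ext_iff]
  have hcadd : MvPolynomial.coeff d (WittVector.wittAdd p n) ≠ 0 := by
    intro h0
    apply hc
    rw [MvPolynomial.coeff_sub, MvPolynomial.coeff_sub, h0, MvPolynomial.coeff_X',
      MvPolynomial.coeff_X', if_neg (fun h => hne _ h.symm), if_neg (fun h => hne _ h.symm)]
    norm_num
  have hw := aux_whomog_wittAdd p n hcadd
  have hw' : ∑ i ∈ d.support, d i * p ^ i.2 = p ^ n := by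
    simpa [Finsupp.weight_apply, Finsupp.sum, smul_eq_mul] using hw
  have hp1 : 1 < p := (Fact.out (p := p.Prime)).one_lt
  have hA : ∀ i : Fin 2 × ℕ, n ≤ i.2 → d i = 0 := by
    rintro ⟨b, k⟩ hk
    by_contra hdi
    have hmem : ((b, k) : Fin 2 × ℕ) ∈ d.support := Finsupp.mem_support_iff.mpr hdi
    have hle : d (b, k) * p ^ k ≤ p ^ n := by
      calc d (b, k) * p ^ k ≤ ∑ i ∈ d.support, d i * p ^ i.2 :=
            Finset.single_le_sum (f := fun i => d i * p ^ i.2) (fun i _ => Nat.zero_le _) hmem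
        _ = p ^ n := hw'
    have hkn : k = n := by
      have h1 : p ^ k ≤ p ^ n :=
        le_trans (Nat.le_mul_of_pos_left _ (Nat.pos_of_ne_zero hdi)) hle
      have h2 : p ^ n ≤ p ^ k := Nat.pow_le_pow_right (le_of_lt hp1) hk
      exact Nat.pow_right_injective (by omega) (le_antisymm h1 h2)
    subst hkn
    have hd1 : d (b, k) = 1 := by
      have hP : 0 < p ^ k := pow_pos (by omega) k
      have : d (b, k) ≤ 1 := Nat.le_of_mul_le_mul_right (by simpa [one_mul] using hle) hP
      omega
    have hsum0 : ∑ i ∈ d.support.erase (b, k), d i * p ^ i.2 = 0 := by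
      have h3 := Finset.add_sum_erase d.support (fun i => d i * p ^ i.2) hmem
      simp only [hd1, one_mul] at h3
      omega
    apply hne b
    ext j
    by_cases hj : j = (b, k)
    · subst hj; simp [hd1]
    · rw [Finsupp.single_eq_of_ne' (Ne.symm hj)]
      by_contra hdj
      have hjs : j ∈ d.support.erase (b, k) :=
        Finset.mem_erase.mpr ⟨hj, Finsupp.mem_support_iff.mpr hdj⟩
      have h4 : d j * p ^ j.2 ≤ 0 := by
        calc d j * p ^ j.2 ≤ ∑ i ∈ d.support.erase (b, k), d i * p ^ i.2 :=
              Finset.single_le_sum (f := fun i => d i * p ^ i.2) (fun i _ => Nat.zero_le _) hjs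
          _ = 0 := hsum0
      rcases Nat.mul_eq_zero.mp (Nat.le_zero.mp h4) with h | h
      · exact hdj h
      · exact absurd h (pow_pos (by omega : 0 < p) j.2).ne'
  refine ⟨hA, ?_⟩
  have hsub : d.support ⊆ Finset.univ ×ˢ Finset.range n := by
    intro i hi
    rw [Finset.mem_product, Finset.mem_range]
    refine ⟨Finset.mem_univ _, ?_⟩
    by_contra h
    exact (Finsupp.mem_support_iff.mp hi) (hA i (le_of_not_gt h))
  calc ∑ k ∈ Finset.range n, p ^ k * (d (0, k) + d (1, k))
      = ∑ i ∈ Finset.univ ×ˢ Finset.range n, d i * p ^ i.2 := by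
        rw [Finset.sum_product_right]
        apply Finset.sum_congr rfl
        intro k _
        rw [Fin.sum_univ_two]
        ring
    _ = ∑ i ∈ d.support, d i * p ^ i.2 :=
        (Finset.sum_subset hsub (fun i _ hi => by
          rw [Finsupp.notMem_support_iff.mp hi, zero_mul])).symm
    _ = p ^ n := hw'
theorem aux_nsmul_coe (c : ℕ) (r : ℝ) : c • ((r : WithTop ℝ)) = ((c • r : ℝ) : WithTop ℝ) := by
  induction c with
  | zero => simp
  | succ c ih => rw [succ_nsmul, succ_nsmul, ih, ← WithTop.coe_add]

theorem aux_nsmul_top {c : ℕ} (hc : c ≠ 0) : c • (⊤ : WithTop ℝ) = ⊤ := by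
  cases c with
  | zero => exact absurd rfl hc
  | succ c => rw [succ_nsmul]; exact add_top _

theorem aux_nsmul_lt {a b : WithTop ℝ} {c : ℕ} (hc : c ≠ 0) (h : a < b) :
    c • a < c • b := by
  lift a to ℝ using h.ne_top
  cases b with
  | top =>
    rw [aux_nsmul_top hc, aux_nsmul_coe]
    exact WithTop.coe_lt_top _
  | coe b =>
    rw [aux_nsmul_coe, aux_nsmul_coe, WithTop.coe_lt_coe]
    have hb : a < b := by exact_mod_cast h
    have : (0:ℝ) < (c:ℝ) := by positivity
    rw [nsmul_eq_mul, nsmul_eq_mul]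
    exact (mul_lt_mul_iff_right₀ this).mpr hb

theorem aux_nsmul_le {a b : WithTop ℝ} (c : ℕ) (h : a ≤ b) : c • a ≤ c • b := by
  induction c with
  | zero => simp
  | succ c ih => rw [succ_nsmul, succ_nsmul]; exact add_le_add ih h

theorem aux_nsmul_ne_top {a : WithTop ℝ} (c : ℕ) (ha : a ≠ ⊤) : c • a ≠ ⊤ := by
  lift a to ℝ using ha
  rw [aux_nsmul_coe]
  exact WithTop.coe_ne_top

theorem aux_map_prod {R : Type*} [CommRing R] (v : AddValuation R (WithTop ℝ))
    {ι : Type*} (s : Finset ι) (f : ι → R) :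
    v (∏ i ∈ s, f i) = ∑ i ∈ s, v (f i) := by
  induction s using Finset.cons_induction with
  | empty => simp
  | cons a s ha ih => rw [Finset.prod_cons, Finset.sum_cons, v.map_mul, ih]

theorem aux_v_natCast {R : Type*} [CommRing R] (v : AddValuation R (WithTop ℝ)) (m : ℕ) :
    0 ≤ v (m : R) := by
  induction m with
  | zero => simp
  | succ m ih =>
    push_cast
    calc (0 : WithTop ℝ) ≤ min (v (m : R)) (v 1) := by simp [ih]
      _ ≤ v ((m : R) + 1) := v.map_add _ _

theorem aux_v_intCast {R : Type*} [CommRing R] (v : AddValuation R (WithTop ℝ)) (m : ℤ) :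
    0 ≤ v (m : R) := by
  rcases Int.eq_nat_or_neg m with ⟨k, rfl | rfl⟩
  · exact_mod_cast aux_v_natCast v k
  · push_cast
    rw [v.map_neg]
    exact aux_v_natCast v k
theorem aux_sum_nsmul {ι : Type*} (s : Finset ι) (c : ι → ℕ) (t : WithTop ℝ) :
    (∑ i ∈ s, c i) • t = ∑ i ∈ s, c i • t := by
  induction s using Finset.cons_induction with
  | empty => simp
  | cons a s ha ih => rw [Finset.sum_cons, Finset.sum_cons, add_nsmul, ih]

theorem aux_sum_ne_top {ι : Type*} (s : Finset ι) (g : ι → WithTop ℝ)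
    (h : ∀ i ∈ s, g i ≠ ⊤) : ∑ i ∈ s, g i ≠ ⊤ := by
  induction s using Finset.cons_induction with
  | empty => simp
  | cons a s ha ih =>
    rw [Finset.sum_cons]
    exact WithTop.add_ne_top.mpr ⟨h a (Finset.mem_cons_self a s),
      ih (fun i hi => h i (Finset.mem_cons.mpr (Or.inr hi)))⟩

theorem aux_add_lt_add {a b a' b' : WithTop ℝ} (ha : a ≠ ⊤) (ha' : a' ≠ ⊤)
    (h : a < b) (h' : a' ≤ b') : a + a' < b + b' := by
  lift a to ℝ using ha
  lift a' to ℝ using ha'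
  rcases eq_or_ne (b + b') ⊤ with hbb | hbb
  · rw [hbb, ← WithTop.coe_add]
    exact WithTop.coe_lt_top _
  · have hb := (WithTop.add_ne_top.mp hbb).1
    have hb' := (WithTop.add_ne_top.mp hbb).2
    lift b to ℝ using hb
    lift b' to ℝ using hb'
    rw [← WithTop.coe_add, ← WithTop.coe_add, WithTop.coe_lt_coe]
    exact add_lt_add_of_lt_of_le (by exact_mod_cast h) (by exact_mod_cast h')

theorem aux_add_lt_add' {a b a' b' : WithTop ℝ} (ha : a ≠ ⊤) (ha' : a' ≠ ⊤)
    (h : a ≤ b) (h' : a' < b') : a + a' < b + b' := by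
  rw [add_comm a a', add_comm b b']
  exact aux_add_lt_add ha' ha h' h

theorem aux_part1 {R : Type*} [CommRing R] (v : AddValuation R (WithTop ℝ))
    (p n : ℕ) [Fact p.Prime] (x y : ℕ → R)
    (hx : ∀ m ≤ n, v (y n) < v (x m)) (hy : ∀ m < n, v (y n) < v (y m))
    (i j : ℕ → ℕ) (hsum : ∑ k ∈ Finset.range n, p ^ k * (i k + j k) = p ^ n) :
    (p ^ n : ℕ) • v (y n) <
      v (∏ k ∈ Finset.range n, y k ^ (p ^ k * i k) * x k ^ (p ^ k * j k)) := by
  have ht : v (y n) ≠ ⊤ := ((hx 0 (Nat.zero_le n)).trans_le le_top).ne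
  have hvt : v (∏ k ∈ Finset.range n, y k ^ (p ^ k * i k) * x k ^ (p ^ k * j k)) =
      ∑ k ∈ Finset.range n, ((p ^ k * i k) • v (y k) + (p ^ k * j k) • v (x k)) := by
    rw [aux_map_prod]
    apply Finset.sum_congr rfl
    intro k _
    rw [v.map_mul, v.map_pow, v.map_pow]
  have hle : ∀ k ∈ Finset.range n,
      (p ^ k * (i k + j k)) • v (y n) ≤ (p ^ k * i k) • v (y k) + (p ^ k * j k) • v (x k) := by
    intro k hk
    rw [Nat.mul_add, add_nsmul]
    exact add_le_add (aux_nsmul_le _ (le_of_lt (hy k (Finset.mem_range.mp hk))))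
      (aux_nsmul_le _ (le_of_lt (hx k (le_of_lt (Finset.mem_range.mp hk)))))
  obtain ⟨k₀, hk₀mem, hk₀⟩ : ∃ k ∈ Finset.range n, p ^ k * (i k + j k) ≠ 0 := by
    by_contra h
    push_neg at h
    rw [Finset.sum_eq_zero h] at hsum
    exact pow_ne_zero n (Fact.out (p := p.Prime)).ne_zero hsum.symm
  have hppos : p ^ k₀ ≠ 0 := pow_ne_zero _ (Fact.out (p := p.Prime)).ne_zero
  have hstrict : (p ^ k₀ * (i k₀ + j k₀)) • v (y n) <
      (p ^ k₀ * i k₀) • v (y k₀) + (p ^ k₀ * j k₀) • v (x k₀) := by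
    rw [Nat.mul_add, add_nsmul]
    have hij : i k₀ + j k₀ ≠ 0 := fun h => hk₀ (by rw [h, Nat.mul_zero])
    rcases Nat.eq_zero_or_pos (i k₀) with hi0 | hi0
    · have hj0 : j k₀ ≠ 0 := by omega
      exact aux_add_lt_add' (aux_nsmul_ne_top _ ht) (aux_nsmul_ne_top _ ht)
        (aux_nsmul_le _ (le_of_lt (hy k₀ (Finset.mem_range.mp hk₀mem))))
        (aux_nsmul_lt (Nat.mul_ne_zero hppos hj0)
          (hx k₀ (le_of_lt (Finset.mem_range.mp hk₀mem))))
    · exact aux_add_lt_add (aux_nsmul_ne_top _ ht) (aux_nsmul_ne_top _ ht)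
        (aux_nsmul_lt (Nat.mul_ne_zero hppos (by omega))
          (hy k₀ (Finset.mem_range.mp hk₀mem)))
        (aux_nsmul_le _ (le_of_lt (hx k₀ (le_of_lt (Finset.mem_range.mp hk₀mem)))))
  calc (p ^ n : ℕ) • v (y n)
      = ∑ k ∈ Finset.range n, (p ^ k * (i k + j k)) • v (y n) := by
        rw [← hsum, aux_sum_nsmul]
    _ < ∑ k ∈ Finset.range n, ((p ^ k * i k) • v (y k) + (p ^ k * j k) • v (x k)) := by
        rw [← Finset.add_sum_erase _ _ hk₀mem,
          ← Finset.add_sum_erase _ (fun k => (p ^ k * i k) • v (y k) + (p ^ k * j k) • v (x k))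
            hk₀mem]
        exact aux_add_lt_add (aux_nsmul_ne_top _ ht)
          (aux_sum_ne_top _ _ (fun k _ => aux_nsmul_ne_top _ ht)) hstrict
          (Finset.sum_le_sum fun k hk => hle k (Finset.mem_of_mem_erase hk))
    _ = v (∏ k ∈ Finset.range n, y k ^ (p ^ k * i k) * x k ^ (p ^ k * j k)) := hvt.symm
/-- In a valuation ring with rank-1 (additive) valuation `v`, if `v(yₙ) < v(xₘ)` for all
`m ≤ n` and `v(yₙ) < v(yₘ)` for all `m < n`, then every monomial
`∏_{k<n} y_k^{p^k i_k} x_k^{p^k j_k}` with `Σ p^k(i_k+j_k) = pⁿ` has valuation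
`> pⁿ·v(yₙ)`, and consequently `v(Sₙ(y₀,…,yₙ^{pⁿ}; x₀,…,xₙ^{pⁿ})) = pⁿ·v(yₙ)`. -/
theorem stmt8 (p : ℕ) [Fact p.Prime] (R : Type*) [CommRing R] [IsDomain R]
    [ValuationRing R] (v : AddValuation R (WithTop ℝ)) (n : ℕ) (x y : ℕ → R)
    (hx : ∀ m ≤ n, v (y n) < v (x m)) (hy : ∀ m < n, v (y n) < v (y m)) :
    (∀ i j : ℕ → ℕ, (∑ k ∈ Finset.range n, p ^ k * (i k + j k) = p ^ n) →
      (p ^ n : ℕ) • v (y n) <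
        v (∏ k ∈ Finset.range n, y k ^ (p ^ k * i k) * x k ^ (p ^ k * j k))) ∧
    v (MvPolynomial.aeval
        (fun bi : Fin 2 × ℕ => if bi.1 = 0 then y bi.2 ^ p ^ bi.2 else x bi.2 ^ p ^ bi.2)
        (WittVector.wittAdd p n)) = (p ^ n : ℕ) • v (y n) := by
  refine ⟨fun i j hsum => aux_part1 v p n x y hx hy i j hsum, ?_⟩
  have ht : v (y n) ≠ ⊤ := ((hx 0 (Nat.zero_le n)).trans_le le_top).ne
  set f : Fin 2 × ℕ → R :=
    fun bi => if bi.1 = 0 then y bi.2 ^ p ^ bi.2 else x bi.2 ^ p ^ bi.2 with hfdef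
  have hf0 : ∀ k, f (0, k) = y k ^ p ^ k := fun k => if_pos rfl
  have h10 : ((1 : Fin 2)) ≠ 0 := by decide
  have hf1 : ∀ k, f (1, k) = x k ^ p ^ k := fun k => if_neg h10
  set E := WittVector.wittAdd p n - X (0, n) - X (1, n) with hE
  have hsplit : WittVector.wittAdd p n = X (0, n) + (X (1, n) + E) := by rw [hE]; ring
  have hEval : (p ^ n : ℕ) • v (y n) < v (MvPolynomial.aeval f E) := by
    rw [MvPolynomial.aeval_def, MvPolynomial.eval₂_eq]
    apply v.map_lt_sum (aux_nsmul_ne_top _ ht)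
    intro d hd
    obtain ⟨hA, hB⟩ := aux_E_support p n d hd
    have hsub : d.support ⊆ Finset.univ ×ˢ Finset.range n := by
      intro i hi
      rw [Finset.mem_product, Finset.mem_range]
      refine ⟨Finset.mem_univ _, ?_⟩
      by_contra h
      exact (Finsupp.mem_support_iff.mp hi) (hA i (le_of_not_gt h))
    have hconv : (∏ i ∈ d.support, f i ^ d i) =
        ∏ k ∈ Finset.range n, y k ^ (p ^ k * d (0, k)) * x k ^ (p ^ k * d (1, k)) := by
      rw [Finset.prod_subset hsub (fun i _ hi => by
        rw [Finsupp.notMem_support_iff.mp hi, pow_zero])]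
      rw [Finset.prod_product_right]
      apply Finset.prod_congr rfl
      intro k _
      rw [Fin.prod_univ_two, hf0, hf1, ← pow_mul, ← pow_mul]
    have hprod : (p ^ n : ℕ) • v (y n) < v (∏ i ∈ d.support, f i ^ d i) := by
      rw [hconv]
      exact aux_part1 v p n x y hx hy (fun k => d (0, k)) (fun k => d (1, k)) hB
    have h0 : (0 : WithTop ℝ) ≤ v ((algebraMap ℤ R) (MvPolynomial.coeff d E)) := by
      rw [algebraMap_int_eq, eq_intCast]
      exact aux_v_intCast v _
    calc (p ^ n : ℕ) • v (y n) < v (∏ i ∈ d.support, f i ^ d i) := hprod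
      _ = 0 + v (∏ i ∈ d.support, f i ^ d i) := (zero_add _).symm
      _ ≤ v ((algebraMap ℤ R) (MvPolynomial.coeff d E)) + v (∏ i ∈ d.support, f i ^ d i) :=
          add_le_add h0 le_rfl
      _ = v ((algebraMap ℤ R) (MvPolynomial.coeff d E) * ∏ i ∈ d.support, f i ^ d i) :=
          (v.map_mul _ _).symm
  have h2 : v (y n ^ p ^ n) < v (x n ^ p ^ n + MvPolynomial.aeval f E) := by
    rw [v.map_pow]
    apply v.map_lt_add
    · rw [v.map_pow]
      exact aux_nsmul_lt (pow_ne_zero _ (Fact.out (p := p.Prime)).ne_zero) (hx n le_rfl)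
    · exact hEval
  rw [hsplit, map_add (MvPolynomial.aeval f), map_add (MvPolynomial.aeval f),
    MvPolynomial.aeval_X, MvPolynomial.aeval_X, hf0, hf1,
    v.map_add_eq_of_lt_left h2, v.map_pow]
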